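/- Let A be a bialgebra over a field k with comultiplication Δ and counit ε. Set K₀ = A, K₁ = ker ε, and Kₙ = K₁ⁿ for n ≥ 1. Then for every n ≥ 1, Δ(Kₙ) ⊆ Σ_{ℓ=0}^{n} K_ℓ ⊗ K_{n−ℓ} (as subspaces of A⊗A); consequently Δ(Kₙ) ⊆ K_{⌊n/2⌋} ⊗ A + A ⊗ K_{⌊n/2⌋}. -/

import Mathlib

open TensorProduct

section Aux

variable {k A : Type*} [Field k] [Ring A] [Bialgebra k A]

local notation "ε" => (Coalgebra.counit : A →ₗ[k] k)
local notation "Δ" => (Coalgebra.comul : A →ₗ[k] A ⊗[k] A)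

/-- `Jp 0 = ⊤`, `Jp n = (ker ε)^n`. -/
noncomputable def Jp (k A : Type*) [Field k] [Ring A] [Bialgebra k A] : ℕ → Submodule k A
  | 0 => ⊤
  | (n+1) => (LinearMap.ker (Coalgebra.counit : A →ₗ[k] k)) ^ (n + 1)

lemma Jp_zero : Jp k A 0 = ⊤ := rfl

lemma Jp_pos (n : ℕ) (hn : 1 ≤ n) :
    Jp k A n = (LinearMap.ker (Coalgebra.counit : A →ₗ[k] k)) ^ n := by
  cases n with
  | zero => omega
  | succ m => rfl

lemma top_mul_J : (⊤ : Submodule k A) * LinearMap.ker ε ≤ LinearMap.ker ε := by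
  rw [Submodule.mul_le]
  intro a _ x hx
  simp [LinearMap.mem_ker.mp hx]

lemma J_mul_top : (LinearMap.ker ε : Submodule k A) * ⊤ ≤ LinearMap.ker ε := by
  rw [Submodule.mul_le]
  intro x hx a _
  simp [LinearMap.mem_ker.mp hx]

lemma top_mul_Jp (b : ℕ) : (⊤ : Submodule k A) * Jp k A b ≤ Jp k A b := by
  cases b with
  | zero => exact le_top
  | succ m =>
    show (⊤ : Submodule k A) * LinearMap.ker ε ^ (m+1) ≤ LinearMap.ker ε ^ (m+1)
    rw [pow_succ', ← mul_assoc]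
    exact mul_le_mul_left top_mul_J _

lemma Jp_mul_top (b : ℕ) : Jp k A b * (⊤ : Submodule k A) ≤ Jp k A b := by
  cases b with
  | zero => exact le_top
  | succ m =>
    show LinearMap.ker ε ^ (m+1) * (⊤ : Submodule k A) ≤ LinearMap.ker ε ^ (m+1)
    rw [pow_succ, mul_assoc]
    exact mul_le_mul_right J_mul_top _

lemma Jp_mul_le (a b : ℕ) : Jp k A a * Jp k A b ≤ Jp k A (a + b) := by
  cases a with
  | zero => rw [Nat.zero_add]; exact top_mul_Jp b
  | succ n =>
    cases b with
    | zero => rw [Nat.add_zero]; exact Jp_mul_top (n+1)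
    | succ m =>
      show LinearMap.ker ε ^ (n+1) * LinearMap.ker ε ^ (m+1) ≤ LinearMap.ker ε ^ (n+1+(m+1))
      rw [← pow_add]

lemma Jp_antitone {a b : ℕ} (h : a ≤ b) : Jp k A b ≤ Jp k A a := by
  obtain ⟨c, rfl⟩ := Nat.exists_eq_add_of_le h
  cases c with
  | zero => rw [Nat.add_zero]
  | succ m =>
    cases a with
    | zero => exact le_top
    | succ n =>
      calc Jp k A (n+1+(m+1)) = Jp k A (n+1) * Jp k A (m+1) := by
            show LinearMap.ker ε ^ (n+1+(m+1)) =
              LinearMap.ker ε ^ (n+1) * LinearMap.ker ε ^ (m+1)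
            rw [← pow_add]
        _ ≤ Jp k A (n+1) * ⊤ := mul_le_mul_right le_top _
        _ ≤ Jp k A (n+1) := Jp_mul_top _

lemma map2_mul_le (P Q R S : Submodule k A) :
    Submodule.map₂ (TensorProduct.mk k A A) P Q * Submodule.map₂ (TensorProduct.mk k A A) R S
      ≤ Submodule.map₂ (TensorProduct.mk k A A) (P * R) (Q * S) := by
  rw [Submodule.mul_le]
  intro x hx y hy
  have H : Submodule.map₂ (TensorProduct.mk k A A) P Q ≤
      Submodule.comap (LinearMap.mulRight k y)
        (Submodule.map₂ (TensorProduct.mk k A A) (P * R) (Q * S)) := by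
    rw [Submodule.map₂_le]
    intro p hp q hq
    simp only [Submodule.mem_comap, LinearMap.mulRight_apply]
    have H2 : Submodule.map₂ (TensorProduct.mk k A A) R S ≤
        Submodule.comap (LinearMap.mulLeft k ((TensorProduct.mk k A A) p q))
          (Submodule.map₂ (TensorProduct.mk k A A) (P * R) (Q * S)) := by
      rw [Submodule.map₂_le]
      intro r hr s hs
      simp only [Submodule.mem_comap, LinearMap.mulLeft_apply, TensorProduct.mk_apply,
        Algebra.TensorProduct.tmul_mul_tmul]
      exact Submodule.apply_mem_map₂ _ (Submodule.mul_mem_mul hp hr)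
        (Submodule.mul_mem_mul hq hs)
    exact H2 hy
  exact H hx

lemma rTensor_ker_mem (φ : A →ₗ[k] A) (hφ : ∀ a, φ a ∈ LinearMap.ker ε)
    (y : A ⊗[k] A) :
    (φ.rTensor A) y ∈ Submodule.map₂ (TensorProduct.mk k A A) (LinearMap.ker ε) ⊤ := by
  induction y with
  | zero => rw [map_zero]; exact zero_mem _
  | tmul a b =>
    rw [LinearMap.rTensor_tmul]
    exact Submodule.apply_mem_map₂ _ (hφ a) trivial
  | add u v hu hv => rw [map_add]; exact add_mem hu hv

lemma comul_ker_mem (x : A) (hx : x ∈ LinearMap.ker ε) :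
    Δ x ∈ Submodule.map₂ (TensorProduct.mk k A A) ⊤ (LinearMap.ker ε)
      ⊔ Submodule.map₂ (TensorProduct.mk k A A) (LinearMap.ker ε) ⊤ := by
  set φ : A →ₗ[k] A := LinearMap.id - (Algebra.linearMap k A) ∘ₗ ε with hφdef
  have hφ : ∀ a, φ a ∈ LinearMap.ker ε := by
    intro a
    simp [hφdef, Algebra.algebraMap_eq_smul_one]
  have key : (φ.rTensor A) (Δ x) = Δ x - (1 : A) ⊗ₜ[k] x := by
    rw [hφdef, LinearMap.rTensor_sub, LinearMap.sub_apply, LinearMap.rTensor_id,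
      LinearMap.id_apply, LinearMap.rTensor_comp, LinearMap.comp_apply,
      Coalgebra.rTensor_counit_comul, LinearMap.rTensor_tmul,
      Algebra.linearMap_apply, map_one]
  have : Δ x = (1 : A) ⊗ₜ[k] x + (φ.rTensor A) (Δ x) := by
    rw [key]; abel
  rw [this]
  exact add_mem
    (Submodule.mem_sup_left (Submodule.apply_mem_map₂ _ trivial hx))
    (Submodule.mem_sup_right (rTensor_ker_mem φ hφ _))

/-- The filtration submodule `∑ ℓ, Jp ℓ ⊗ Jp (n-ℓ)`. -/
noncomputable def Fil (k A : Type*) [Field k] [Ring A] [Bialgebra k A] (n : ℕ) :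
    Submodule k (A ⊗[k] A) :=
  ∑ ℓ ∈ Finset.range (n + 1),
    Submodule.map₂ (TensorProduct.mk k A A) (Jp k A ℓ) (Jp k A (n - ℓ))

lemma sum_le_of {ι M : Type*} [AddCommMonoid M] [Module k M] (s : Finset ι)
    (f : ι → Submodule k M) (N : Submodule k M) (h : ∀ i ∈ s, f i ≤ N) :
    ∑ i ∈ s, f i ≤ N := by
  classical
  induction s using Finset.induction_on with
  | empty => rw [Finset.sum_empty]; exact bot_le
  | insert a t hni ih =>
    rw [Finset.sum_insert hni, Submodule.add_eq_sup]
    exact sup_le (h _ (Finset.mem_insert_self _ _))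
      (ih fun i hi => h i (Finset.mem_insert_of_mem hi))

lemma le_sum_of {ι M : Type*} [AddCommMonoid M] [Module k M] (s : Finset ι)
    (f : ι → Submodule k M) {i : ι} (hi : i ∈ s) : f i ≤ ∑ j ∈ s, f j := by
  classical
  rw [← Finset.add_sum_erase _ f hi, Submodule.add_eq_sup]
  exact le_sup_left

lemma Fil_mul_le (n : ℕ) : Fil k A 1 * Fil k A n ≤ Fil k A (n + 1) := by
  rw [Fil, Fil, Finset.sum_mul_sum]
  apply sum_le_of
  intro i hi
  apply sum_le_of
  intro j hj
  rw [Finset.mem_range] at hi hj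
  refine le_trans (map2_mul_le _ _ _ _) ?_
  have h3 : 1 - i + (n - j) = n + 1 - (i + j) := by omega
  have h4 := Jp_mul_le (k := k) (A := A) (1 - i) (n - j)
  rw [h3] at h4
  refine le_trans (Submodule.map₂_le_map₂ (Jp_mul_le i j) h4) ?_
  exact le_sum_of (Finset.range (n + 1 + 1))
    (fun ℓ => Submodule.map₂ (TensorProduct.mk k A A) (Jp k A ℓ) (Jp k A (n + 1 - ℓ)))
    (i := i + j) (Finset.mem_range.mpr (by omega))

lemma comul_mem_Fil_one (a : A) (ha : a ∈ LinearMap.ker ε) : Δ a ∈ Fil k A 1 := by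
  rw [Fil]
  rw [Finset.sum_range_succ, Finset.sum_range_one, Submodule.add_eq_sup]
  have h1 : Jp k A 1 = LinearMap.ker ε := pow_one _
  rw [h1]
  simpa [Jp_zero] using comul_ker_mem a ha

lemma comul_mem_Fil : ∀ n : ℕ, 1 ≤ n → ∀ x ∈ Jp k A n, Δ x ∈ Fil k A n := by
  intro n hn
  induction n, hn using Nat.le_induction with
  | base =>
    intro x hx
    exact comul_mem_Fil_one x (by rwa [show Jp k A 1 = LinearMap.ker ε from pow_one _] at hx)
  | succ n hn ih =>
    intro x hx
    have hx' : x ∈ LinearMap.ker ε * Jp k A n := by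
      rw [Jp_pos _ hn]
      rw [Jp_pos _ (by omega), pow_succ'] at hx
      exact hx
    refine Submodule.mul_induction_on hx' (fun a ha b hb => ?_)
      (fun u v hu hv => by rw [map_add]; exact add_mem hu hv)
    rw [Bialgebra.comul_mul]
    exact Fil_mul_le n (Submodule.mul_mem_mul (comul_mem_Fil_one a ha) (ih b hb))

lemma Fil_le_half (n : ℕ) :
    Fil k A n ≤ Submodule.map₂ (TensorProduct.mk k A A) (Jp k A (n / 2)) ⊤
      ⊔ Submodule.map₂ (TensorProduct.mk k A A) ⊤ (Jp k A (n / 2)) := by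
  rw [Fil]
  apply sum_le_of
  intro i hi
  rw [Finset.mem_range] at hi
  by_cases h : n / 2 ≤ i
  · exact le_trans (Submodule.map₂_le_map₂ (Jp_antitone h) le_top) le_sup_left
  · exact le_trans (Submodule.map₂_le_map₂ le_top (Jp_antitone (by omega))) le_sup_right

end Aux

/-- The filtration property of the powers of the augmentation ideal of a
bialgebra: `Δ(Kₙ) ⊆ Σ_{ℓ=0}^{n} K_ℓ ⊗ K_{n−ℓ}`, and consequently
`Δ(Kₙ) ⊆ K_{⌊n/2⌋} ⊗ A + A ⊗ K_{⌊n/2⌋}`. -/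
theorem comul_augmentation_filtration
    {k A : Type*} [Field k] [Ring A] [Bialgebra k A]
    (K : ℕ → Submodule k A)
    (hK0 : K 0 = ⊤)
    (hK : ∀ n : ℕ, 1 ≤ n →
      K n = (LinearMap.ker (Coalgebra.counit : A →ₗ[k] k)) ^ n) :
    ∀ n : ℕ, 1 ≤ n → ∀ x ∈ K n,
      ((Coalgebra.comul : A →ₗ[k] A ⊗[k] A) x ∈
        ∑ ℓ ∈ Finset.range (n + 1),
          Submodule.map₂ (TensorProduct.mk k A A) (K ℓ) (K (n - ℓ))) ∧
      ((Coalgebra.comul : A →ₗ[k] A ⊗[k] A) x ∈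
        Submodule.map₂ (TensorProduct.mk k A A) (K (n / 2)) ⊤
          ⊔ Submodule.map₂ (TensorProduct.mk k A A) ⊤ (K (n / 2))) := by
  have hKJ : ∀ m, K m = Jp k A m := by
    intro m
    cases m with
    | zero => exact hK0
    | succ p => exact (hK (p + 1) p.succ_pos).trans (Jp_pos _ p.succ_pos).symm
  intro n hn x hx
  rw [hKJ] at hx
  have h1 : (Coalgebra.comul : A →ₗ[k] A ⊗[k] A) x ∈ Fil k A n := comul_mem_Fil n hn x hx
  constructor
  · have heq : (∑ ℓ ∈ Finset.range (n + 1),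
        Submodule.map₂ (TensorProduct.mk k A A) (K ℓ) (K (n - ℓ))) = Fil k A n := by
      rw [Fil]
      exact Finset.sum_congr rfl fun ℓ _ => by rw [hKJ, hKJ]
    rw [heq]; exact h1
  · rw [hKJ]
    exact Fil_le_half n h1
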